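/- If the ABC vector field u is nonsingular, then the 1-form α = (A sin z + C cos y)dx + (B sin x + A cos z)dy + (C sin y + B cos x)dz is a contact form, i.e., α ∧ dα is nowhere vanishing. -/
import Mathlib


/-- Components of the ABC field = coefficients of the 1-form
α = u₁ dx + u₂ dy + u₃ dz. -/
noncomputable def abc1 (A B C x y z : ℝ) : ℝ := A * Real.sin z + C * Real.cos y
noncomputable def abc2 (A B C x y z : ℝ) : ℝ := B * Real.sin x + A * Real.cos z
noncomputable def abc3 (A B C x y z : ℝ) : ℝ := C * Real.sin y + B * Real.cos x

/-- The coefficient of α ∧ dα with respect to dx ∧ dy ∧ dz, namely u ⬝ curl u. -/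
noncomputable def abcContactFun (A B C x y z : ℝ) : ℝ :=
  abc1 A B C x y z *
      (deriv (fun y' => abc3 A B C x y' z) y - deriv (fun z' => abc2 A B C x y z') z) +
  abc2 A B C x y z *
      (deriv (fun z' => abc1 A B C x y z') z - deriv (fun x' => abc3 A B C x' y z) x) +
  abc3 A B C x y z *
      (deriv (fun x' => abc2 A B C x' y z) x - deriv (fun y' => abc1 A B C x y' z) y)

/-- if the ABC field is nonsingular then
α = u₁ dx + u₂ dy + u₃ dz is a contact form: α ∧ dα is nowhere vanishing. -/
theorem abc_contact_form (A B C : ℝ)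
    (hns : ∀ x y z : ℝ,
      ¬(abc1 A B C x y z = 0 ∧ abc2 A B C x y z = 0 ∧ abc3 A B C x y z = 0)) :
    ∀ x y z : ℝ, abcContactFun A B C x y z ≠ 0 := by
  intro x y z
  have h := hns x y z
  have e : abcContactFun A B C x y z =
      abc1 A B C x y z ^ 2 + abc2 A B C x y z ^ 2 + abc3 A B C x y z ^ 2 := by
    simp only [abcContactFun, abc1, abc2, abc3]
    simp [deriv_add, Real.differentiable_sin, Real.differentiable_cos]
    ring
  rw [e]
  intro hsum
  exact h ⟨by nlinarith [sq_nonneg (abc1 A B C x y z), sq_nonneg (abc2 A B C x y z), sq_nonneg (abc3 A B C x y z)],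
    by nlinarith [sq_nonneg (abc1 A B C x y z), sq_nonneg (abc2 A B C x y z), sq_nonneg (abc3 A B C x y z)],
    by nlinarith [sq_nonneg (abc1 A B C x y z), sq_nonneg (abc2 A B C x y z), sq_nonneg (abc3 A B C x y z)]⟩
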